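/- Let Z, X be real random variables with Var(ZX) > 0 and finite fourth moments. Define ω(z) = Cov( X·1{Z ≥ z}, ZX ) / Var(ZX). Then ∫ ω(z) dz = 1, where the integral is over the support of Z. (The key identity is ∫ X·1{Z ≥ z} dz = XZ when Z ≥ 0, or more generally the weight function integrates to one by Fubini.) -/

import Mathlib

open MeasureTheory

/-- Population covariance of two real random variables. -/
noncomputable def covar {Ω : Type*} [MeasurableSpace Ω] (μ : Measure Ω)
    (f h : Ω → ℝ) : ℝ :=
  (∫ ω, f ω * h ω ∂μ) - (∫ ω, f ω ∂μ) * (∫ ω, h ω ∂μ)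

lemma abs_le_pow4 (a : ℝ) : |a| ≤ a ^ 4 + 1 := by
  rcases le_total |a| 1 with h | h
  · nlinarith [pow_nonneg (abs_nonneg a) 4, sq_abs a, sq_nonneg (a^2)]
  · have h2 : |a| ≤ |a| ^ 4 := le_self_pow₀ h (by norm_num)
    have : |a| ^ 4 = a ^ 4 := by
      rw [show (4:ℕ) = 2 * 2 by norm_num, pow_mul, sq_abs, pow_mul]
    linarith

lemma sq_abs_le (x z : ℝ) : x ^ 2 * |z| ≤ x ^ 4 + z ^ 4 + 1 := by
  nlinarith [sq_nonneg (x ^ 2 - |z|), sq_nonneg (z ^ 2 - 1), sq_abs z, sq_nonneg x,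
    abs_nonneg z, sq_nonneg (x^2), sq_nonneg (z^2)]

/-- With `Z` supported on `[0, M]`, `Var(ZX) > 0` and finite fourth
moments, the weight function `ω(z) = Cov(X·1{Z ≥ z}, ZX)/Var(ZX)` integrates to one
over the support of `Z`. -/
theorem statement4
    {Ω : Type*} [MeasurableSpace Ω] (μ : Measure Ω) [IsProbabilityMeasure μ]
    (X Z : Ω → ℝ) (hX : Measurable X) (hZ : Measurable Z)
    (M : ℝ) (hM : 0 < M)
    (hsupp : ∀ᵐ ω ∂μ, Z ω ∈ Set.Icc (0 : ℝ) M)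
    (hm4X : Integrable (fun ω => X ω ^ 4) μ)
    (hm4Z : Integrable (fun ω => Z ω ^ 4) μ)
    (hvar : 0 < covar μ (fun ω => Z ω * X ω) (fun ω => Z ω * X ω))
    (hfub : IntegrableOn (fun z =>
      covar μ (fun ω => X ω * (Set.Ici z).indicator (fun _ => (1 : ℝ)) (Z ω))
        (fun ω => Z ω * X ω)) (Set.Icc (0 : ℝ) M) volume) :
    (∫ z in Set.Icc (0 : ℝ) M,
        covar μ (fun ω => X ω * (Set.Ici z).indicator (fun _ => (1 : ℝ)) (Z ω))
            (fun ω => Z ω * X ω)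
          / covar μ (fun ω => Z ω * X ω) (fun ω => Z ω * X ω)) = 1 := by
  set I : Set ℝ := Set.Icc (0:ℝ) M with hI
  set ν : Measure ℝ := volume.restrict I with hν
  haveI : IsFiniteMeasure ν := by
    constructor
    rw [hν, Measure.restrict_apply_univ, hI, Real.volume_Icc]
    exact ENNReal.ofReal_lt_top
  set V : ℝ := covar μ (fun ω => Z ω * X ω) (fun ω => Z ω * X ω) with hV
  -- dominating function
  set G : Ω → ℝ := fun ω => X ω ^ 4 + Z ω ^ 4 + 1 with hG
  have hGint : Integrable G μ := (hm4X.add hm4Z).add (integrable_const 1)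
  have hGdom : Integrable (fun p : ℝ × Ω => G p.2) (ν.prod μ) := by
    have h1 : Integrable (fun _ : ℝ => (1:ℝ)) ν := integrable_const 1
    simpa using h1.mul_prod hGint
  -- measurability of the indicator on the product
  have hindeq : (fun p : ℝ × Ω => (Set.Ici p.1).indicator (fun _ => (1:ℝ)) (Z p.2))
      = Set.indicator {p : ℝ × Ω | p.1 ≤ Z p.2} (fun _ => (1:ℝ)) := by
    ext p
    by_cases h : p.1 ≤ Z p.2 <;> simp [Set.indicator_apply, Set.mem_Ici, h]
  have hindm : Measurable (fun p : ℝ × Ω => (Set.Ici p.1).indicator (fun _ => (1:ℝ)) (Z p.2)) := by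
    rw [hindeq]
    exact measurable_const.indicator (measurableSet_le measurable_fst (hZ.comp measurable_snd))
  have hindval : ∀ p : ℝ × Ω,
      (Set.Ici p.1).indicator (fun _ => (1:ℝ)) (Z p.2) = 0 ∨
      (Set.Ici p.1).indicator (fun _ => (1:ℝ)) (Z p.2) = 1 := by
    intro p
    by_cases h : p.1 ≤ Z p.2 <;> simp [Set.indicator_apply, Set.mem_Ici, h]
  -- integrability of the two product functions
  have hF1 : Integrable (fun p : ℝ × Ω =>
      X p.2 * (Set.Ici p.1).indicator (fun _ => (1:ℝ)) (Z p.2) * (Z p.2 * X p.2)) (ν.prod μ) := by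
    refine hGdom.mono' ?_ ?_
    · exact (((hX.comp measurable_snd).mul hindm).mul
        ((hZ.comp measurable_snd).mul (hX.comp measurable_snd))).aestronglyMeasurable
    · refine Filter.Eventually.of_forall fun p => ?_
      rcases hindval p with h | h <;> rw [h]
      · simp only [mul_zero, zero_mul, norm_zero, hG]
        nlinarith [sq_nonneg (X p.2 ^2), sq_nonneg (Z p.2 ^2)]
      · rw [mul_one]
        have h2 : ‖X p.2 * (Z p.2 * X p.2)‖ = X p.2 ^ 2 * |Z p.2| := by
          rw [Real.norm_eq_abs, abs_mul, abs_mul, ← sq_abs]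
          ring
        rw [h2]
        simp only [hG]
        exact sq_abs_le _ _
  have hF2 : Integrable (fun p : ℝ × Ω =>
      X p.2 * (Set.Ici p.1).indicator (fun _ => (1:ℝ)) (Z p.2)) (ν.prod μ) := by
    refine hGdom.mono' ?_ ?_
    · exact ((hX.comp measurable_snd).mul hindm).aestronglyMeasurable
    · refine Filter.Eventually.of_forall fun p => ?_
      rcases hindval p with h | h <;> rw [h]
      · simp only [mul_zero, norm_zero, hG]
        nlinarith [sq_nonneg (X p.2 ^2), sq_nonneg (Z p.2 ^2)]
      · rw [mul_one, Real.norm_eq_abs]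
        simp only [hG]
        have := abs_le_pow4 (X p.2)
        nlinarith [sq_nonneg (Z p.2 ^ 2)]
  -- inner z-integral computation
  have hinner : ∀ ω : Ω, Z ω ∈ Set.Icc (0:ℝ) M →
      (∫ z in I, (Set.Ici z).indicator (fun _ => (1:ℝ)) (Z ω)) = Z ω := by
    intro ω hω
    have heq : (fun z : ℝ => (Set.Ici z).indicator (fun _ => (1:ℝ)) (Z ω))
        = (Set.Iic (Z ω)).indicator (fun _ => (1:ℝ)) := by
      ext z
      by_cases h : z ≤ Z ω <;> simp [Set.indicator_apply, Set.mem_Ici, Set.mem_Iic, h]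
    rw [heq, integral_indicator measurableSet_Iic, Measure.restrict_restrict measurableSet_Iic]
    have : Set.Iic (Z ω) ∩ I = Set.Icc 0 (Z ω) := by
      ext w
      simp only [Set.mem_inter_iff, Set.mem_Iic, hI, Set.mem_Icc]
      obtain ⟨h0, h1⟩ := hω
      constructor
      · rintro ⟨hw, hw0, hwM⟩; exact ⟨hw0, hw⟩
      · rintro ⟨hw0, hw⟩; exact ⟨hw, hw0, le_trans hw h1⟩
    rw [this]
    simp [Real.volume_Icc, ENNReal.toReal_ofReal hω.1, hω.1]
  -- swap for F1
  have hswap1 : (∫ z in I, ∫ ω, X ω * (Set.Ici z).indicator (fun _ => (1:ℝ)) (Z ω)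
        * (Z ω * X ω) ∂μ)
      = ∫ ω, (Z ω * X ω) * (Z ω * X ω) ∂μ := by
    rw [integral_integral_swap hF1]
    refine integral_congr_ae ?_
    filter_upwards [hsupp] with ω hω
    have : (fun z => X ω * (Set.Ici z).indicator (fun _ => (1:ℝ)) (Z ω) * (Z ω * X ω))
        = fun z => (X ω * (Z ω * X ω)) * (Set.Ici z).indicator (fun _ => (1:ℝ)) (Z ω) := by
      ext z; ring
    rw [this, integral_const_mul, hinner ω hω]
    ring
  -- swap for F2
  have hswap2 : (∫ z in I, ∫ ω, X ω * (Set.Ici z).indicator (fun _ => (1:ℝ)) (Z ω) ∂μ)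
      = ∫ ω, Z ω * X ω ∂μ := by
    rw [integral_integral_swap hF2]
    refine integral_congr_ae ?_
    filter_upwards [hsupp] with ω hω
    rw [integral_const_mul, hinner ω hω]
    ring
  -- integrability of the pieces over I
  have hA : Integrable (fun z => ∫ ω, X ω * (Set.Ici z).indicator (fun _ => (1:ℝ)) (Z ω)
      * (Z ω * X ω) ∂μ) ν := hF1.integral_prod_left
  have hB : Integrable (fun z => ∫ ω, X ω * (Set.Ici z).indicator (fun _ => (1:ℝ)) (Z ω) ∂μ) ν :=
    hF2.integral_prod_left
  -- main computation
  have hmain : (∫ z in I,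
      covar μ (fun ω => X ω * (Set.Ici z).indicator (fun _ => (1 : ℝ)) (Z ω))
        (fun ω => Z ω * X ω)) = V := by
    simp only [covar]
    rw [integral_sub hA (hB.mul_const _), integral_mul_const, hswap1, hswap2, hV, covar]
  calc (∫ z in I,
        covar μ (fun ω => X ω * (Set.Ici z).indicator (fun _ => (1 : ℝ)) (Z ω))
            (fun ω => Z ω * X ω) / V)
      = (∫ z in I,
        covar μ (fun ω => X ω * (Set.Ici z).indicator (fun _ => (1 : ℝ)) (Z ω))
            (fun ω => Z ω * X ω)) / V := integral_div V _
    _ = V / V := by rw [hmain]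
    _ = 1 := div_self (ne_of_gt hvar)
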